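/- Let n ≥ 1. The linear span of the (n+1 choose 2) Bell vectors b_{ij} (distinct i, j ∈ Fin (n+1), restricted to coordinates indexed by nonempty subsets of Fin n) equals the linear subspace of ℝ^(2^n − 1) consisting of all vectors s satisfying ∑_{I ⊆ V} (−1)^{|I|} s(I) = 0 for every V ⊆ Fin n with |V| ≥ 3 (where s(∅) is taken to be 0); in particular this subspace has dimension n + (n choose 2) = (n+1 choose 2). -/

import Mathlib

/-- The Bell entropy vector `b_{ij}` for `i, j ∈ Fin (n+1)`, recorded on the nonempty
subsets `I ⊆ Fin n` (viewed inside `Fin (n+1)` via the natural embedding `Fin.castSucc`):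
its `I`-th coordinate is `1` if exactly one of `i, j` lies in `I`, and `0` otherwise. -/
def bellVec (n : ℕ) (i j : Fin (n + 1)) : {I : Finset (Fin n) // I.Nonempty} → ℝ :=
  fun I =>
    if Xor (i ∈ I.1.map ⟨Fin.castSucc, Fin.castSucc_injective n⟩)
        (j ∈ I.1.map ⟨Fin.castSucc, Fin.castSucc_injective n⟩) then 1 else 0

/-- The indicator vector of "contains `s`". -/
def gvec (n : ℕ) (s : Finset (Fin n)) : {I : Finset (Fin n) // I.Nonempty} → ℝ :=
  fun I => if s ⊆ I.1 then 1 else 0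

/-- The multivariate-information linear functional attached to `V ⊆ Fin n`. -/
def Lmap (n : ℕ) (V : Finset (Fin n)) : ({I : Finset (Fin n) // I.Nonempty} → ℝ) →ₗ[ℝ] ℝ where
  toFun x := ∑ I ∈ V.powerset,
    (-1 : ℝ) ^ I.card * (if h : I.Nonempty then x ⟨I, h⟩ else 0)
  map_add' x y := by
    rw [← Finset.sum_add_distrib]
    refine Finset.sum_congr rfl fun I _ => ?_
    by_cases h : I.Nonempty <;> simp [h] <;> ring
  map_smul' c x := by
    simp only [RingHom.id_apply, Finset.smul_sum]
    refine Finset.sum_congr rfl fun I _ => ?_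
    by_cases h : I.Nonempty <;> simp [h] <;> ring

lemma Lmap_apply (n : ℕ) (V : Finset (Fin n)) (x : {I : Finset (Fin n) // I.Nonempty} → ℝ) :
    Lmap n V x = ∑ I ∈ V.powerset,
      (-1 : ℝ) ^ I.card * (if h : I.Nonempty then x ⟨I, h⟩ else 0) := rfl

lemma sum_powerset_neg_one_pow_card_real {α : Type*} [DecidableEq α] (x : Finset α) :
    (∑ J ∈ x.powerset, (-1 : ℝ) ^ J.card) = if x = ∅ then 1 else 0 := by
  have h := Finset.sum_powerset_neg_one_pow_card (x := x)
  have h2 : ((∑ J ∈ x.powerset, (-1 : ℤ) ^ J.card : ℤ) : ℝ)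
      = ∑ J ∈ x.powerset, (-1 : ℝ) ^ J.card := by push_cast; rfl
  rw [← h2, h]
  split <;> norm_num

/-- Key alternating-sum identity over supersets of `s` inside `V`. -/
lemma sum_filter_subset_pow {n : ℕ} (s V : Finset (Fin n)) (hsV : s ⊆ V) :
    ∑ I ∈ V.powerset.filter (fun I => s ⊆ I), (-1 : ℝ) ^ I.card
      = if V = s then (-1 : ℝ) ^ s.card else 0 := by
  have key : ∑ I ∈ V.powerset.filter (fun I => s ⊆ I), (-1 : ℝ) ^ I.card
      = ∑ J ∈ (V \ s).powerset, (-1 : ℝ) ^ (J.card + s.card) := by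
    refine Finset.sum_nbij' (i := fun I => I \ s) (j := fun J => J ∪ s) ?_ ?_ ?_ ?_ ?_
    · intro I hI
      simp only [Finset.mem_filter, Finset.mem_powerset] at hI
      exact Finset.mem_powerset.2 (Finset.sdiff_subset_sdiff hI.1 le_rfl)
    · intro J hJ
      simp only [Finset.mem_powerset] at hJ
      have hJV : J ⊆ V := hJ.trans Finset.sdiff_subset
      simp only [Finset.mem_filter, Finset.mem_powerset]
      exact ⟨Finset.union_subset hJV hsV, Finset.subset_union_right⟩
    · intro I hI
      simp only [Finset.mem_filter, Finset.mem_powerset] at hI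
      exact Finset.sdiff_union_of_subset hI.2
    · intro J hJ
      simp only [Finset.mem_powerset, Finset.subset_sdiff] at hJ
      show (J ∪ s) \ s = J
      rw [Finset.union_sdiff_right, Finset.sdiff_eq_self_of_disjoint hJ.2]
    · intro I hI
      simp only [Finset.mem_filter, Finset.mem_powerset] at hI
      rw [Finset.card_sdiff_add_card_eq_card hI.2]
  rw [key]
  simp only [pow_add, ← Finset.sum_mul, sum_powerset_neg_one_pow_card_real]
  rcases eq_or_ne V s with rfl | hVs
  · simp
  · rw [if_neg hVs, if_neg, zero_mul]
    intro h
    exact hVs (le_antisymm (Finset.sdiff_eq_empty_iff_subset.1 h) hsV)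

lemma Lmap_gvec {n : ℕ} (V s : Finset (Fin n)) (hs : s.Nonempty) :
    Lmap n V (gvec n s) = if V = s then (-1 : ℝ) ^ s.card else 0 := by
  have hterm : ∀ I ∈ V.powerset,
      (-1 : ℝ) ^ I.card * (if h : I.Nonempty then gvec n s ⟨I, h⟩ else 0)
        = if s ⊆ I then (-1 : ℝ) ^ I.card else 0 := by
    intro I _
    by_cases h : I.Nonempty
    · rw [dif_pos h]
      unfold gvec
      split <;> ring
    · rw [dif_neg h, mul_zero, if_neg]
      intro hsub
      exact h (hs.mono hsub)
  rw [Lmap_apply, Finset.sum_congr rfl hterm, ← Finset.sum_filter]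
  by_cases hsV : s ⊆ V
  · exact sum_filter_subset_pow s V hsV
  · have hVs : V ≠ s := by rintro rfl; exact hsV le_rfl
    rw [if_neg hVs]
    apply Finset.sum_eq_zero
    intro I hI
    simp only [Finset.mem_filter, Finset.mem_powerset] at hI
    exact absurd (hI.2.trans hI.1) hsV

lemma Lmap_empty {n : ℕ} (x : {I : Finset (Fin n) // I.Nonempty} → ℝ) :
    Lmap n ∅ x = 0 := by
  rw [Lmap_apply]
  simp

/-- Möbius inversion: every vector is recovered from the functionals `Lmap`. -/
lemma mobius {n : ℕ} (x : {I : Finset (Fin n) // I.Nonempty} → ℝ)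
    (I : {I : Finset (Fin n) // I.Nonempty}) :
    ∑ V ∈ I.1.powerset, (-1 : ℝ) ^ V.card * Lmap n V x = x I := by
  simp only [Lmap_apply, Finset.mul_sum]
  rw [Finset.sum_comm' (s := I.1.powerset) (t := fun V => V.powerset)
    (t' := I.1.powerset) (s' := fun J => I.1.powerset.filter (fun V => J ⊆ V))
    (by
      intro V J
      simp only [Finset.mem_powerset, Finset.mem_filter]
      constructor
      · rintro ⟨h1, h2⟩; exact ⟨⟨h1, h2⟩, h2.trans h1⟩
      · rintro ⟨⟨h1, h2⟩, _⟩; exact ⟨h1, h2⟩)]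
  have hstep : ∀ J ∈ I.1.powerset,
      (∑ V ∈ I.1.powerset.filter (fun V => J ⊆ V),
        (-1 : ℝ) ^ V.card * ((-1 : ℝ) ^ J.card * (if h : J.Nonempty then x ⟨J, h⟩ else 0)))
      = if I.1 = J then
          (-1 : ℝ) ^ J.card * ((-1 : ℝ) ^ J.card * (if h : J.Nonempty then x ⟨J, h⟩ else 0))
        else 0 := by
    intro J hJ
    rw [← Finset.sum_mul, sum_filter_subset_pow J I.1 (Finset.mem_powerset.1 hJ)]
    split <;> simp
  rw [Finset.sum_congr rfl hstep, Finset.sum_ite_eq _ I.1 _,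
    if_pos (Finset.mem_powerset_self _), dif_pos I.2, ← mul_assoc, ← pow_add]
  rw [Even.neg_one_pow ⟨I.1.card, by ring⟩, one_mul]

lemma bell_last {n : ℕ} (i : Fin n) :
    bellVec n i.castSucc (Fin.last n) = gvec n {i} := by
  funext I
  have hlast : Fin.last n ∉ I.1.map ⟨Fin.castSucc, Fin.castSucc_injective n⟩ := by
    simp only [Finset.mem_map, Function.Embedding.coeFn_mk]
    rintro ⟨a, _, ha⟩
    exact absurd ha (Fin.castSucc_lt_last a).ne
  have hmem : i.castSucc ∈ I.1.map ⟨Fin.castSucc, Fin.castSucc_injective n⟩ ↔ i ∈ I.1 :=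
    Finset.mem_map' _
  unfold bellVec gvec
  by_cases hi : i ∈ I.1 <;>
    simp [Xor, hlast, hmem, hi, Finset.singleton_subset_iff]

lemma bell_castSucc {n : ℕ} (i j : Fin n) :
    bellVec n i.castSucc j.castSucc
      = gvec n {i} + gvec n {j} - (2 : ℝ) • gvec n {i, j} := by
  funext I
  have hmem : ∀ k : Fin n,
      k.castSucc ∈ I.1.map ⟨Fin.castSucc, Fin.castSucc_injective n⟩ ↔ k ∈ I.1 :=
    fun k => Finset.mem_map' _
  have hpair : {i, j} ⊆ I.1 ↔ i ∈ I.1 ∧ j ∈ I.1 := by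
    simp [Finset.insert_subset_iff, Finset.singleton_subset_iff]
  simp only [bellVec, gvec, Pi.add_apply, Pi.sub_apply, Pi.smul_apply, smul_eq_mul,
    hmem, hpair, Finset.singleton_subset_iff]
  by_cases hi : i ∈ I.1 <;> by_cases hj : j ∈ I.1 <;>
    simp [Xor, hi, hj] <;> norm_num

/-- The linear span of the `(n+1 choose 2)` Bell vectors equals the
subspace of `ℝ^(2^n − 1)` cut out by the multivariate information equalities
`∑_{I ⊆ V} (−1)^{|I|} s(I) = 0` for all `V ⊆ Fin n` with `|V| ≥ 3` (taking `s(∅) = 0`);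
in particular this subspace has dimension `n + (n choose 2) = (n+1 choose 2)`. -/
theorem bellVec_span_eq_multivariate_subspace (n : ℕ) (hn : 1 ≤ n) :
    ((Submodule.span ℝ (Set.range (fun p : {p : Fin (n + 1) × Fin (n + 1) // p.1 < p.2} =>
        bellVec n p.1.1 p.1.2)) : Submodule ℝ ({I : Finset (Fin n) // I.Nonempty} → ℝ)) :
        Set ({I : Finset (Fin n) // I.Nonempty} → ℝ)) =
      {s | ∀ V : Finset (Fin n), 3 ≤ V.card →
        ∑ I ∈ V.powerset,
          (-1 : ℝ) ^ I.card * (if h : I.Nonempty then s ⟨I, h⟩ else 0) = 0} ∧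
    Module.finrank ℝ
        (Submodule.span ℝ (Set.range (fun p : {p : Fin (n + 1) × Fin (n + 1) // p.1 < p.2} =>
          bellVec n p.1.1 p.1.2))) = n + n.choose 2 ∧
    n + n.choose 2 = (n + 1).choose 2 := by
  classical
  set b : {p : Fin (n + 1) × Fin (n + 1) // p.1 < p.2} →
      ({I : Finset (Fin n) // I.Nonempty} → ℝ) := fun p => bellVec n p.1.1 p.1.2 with hb
  set P : Finset (Fin n) → Prop := fun s => s.Nonempty ∧ s.card ≤ 2 with hP
  set h : {s : Finset (Fin n) // P s} → ({I : Finset (Fin n) // I.Nonempty} → ℝ) :=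
    fun s => gvec n s.1 with hh
  -- each small `gvec` is in the span of the Bell vectors
  have hg1 : ∀ i : Fin n, gvec n {i} ∈ Submodule.span ℝ (Set.range b) := by
    intro i
    rw [← bell_last i]
    exact Submodule.subset_span ⟨⟨(i.castSucc, Fin.last n), Fin.castSucc_lt_last i⟩, rfl⟩
  have hg2 : ∀ i j : Fin n, i < j →
      gvec n {i, j} ∈ Submodule.span ℝ (Set.range b) := by
    intro i j hij
    have hbmem : bellVec n i.castSucc j.castSucc ∈ Submodule.span ℝ (Set.range b) :=
      Submodule.subset_span ⟨⟨(i.castSucc, j.castSucc), by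
        simpa [Fin.castSucc_lt_castSucc_iff] using hij⟩, rfl⟩
    have key : (2 : ℝ) • gvec n {i, j}
        = gvec n {i} + gvec n {j} - bellVec n i.castSucc j.castSucc := by
      rw [bell_castSucc]; abel
    rw [← Submodule.smul_mem_iff _ (two_ne_zero (α := ℝ)), key]
    exact Submodule.sub_mem _ (Submodule.add_mem _ (hg1 i) (hg1 j)) hbmem
  -- the two spans agree
  have hspan : Submodule.span ℝ (Set.range b) = Submodule.span ℝ (Set.range h) := by
    apply le_antisymm
    · rw [Submodule.span_le]
      rintro _ ⟨⟨⟨p, q⟩, hpq⟩, rfl⟩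
      have hpne : p ≠ Fin.last n := by
        intro hp
        exact absurd (hp ▸ hpq) (Fin.le_last q).not_gt
      obtain ⟨i, rfl⟩ := Fin.exists_castSucc_eq.2 hpne
      rcases Fin.eq_castSucc_or_eq_last q with ⟨j, rfl⟩ | rfl
      · have hij : i ≠ j := by
          rintro rfl
          exact lt_irrefl _ hpq
        have : b ⟨(i.castSucc, j.castSucc), hpq⟩
            = h ⟨{i}, Finset.singleton_nonempty i, by simp⟩
              + h ⟨{j}, Finset.singleton_nonempty j, by simp⟩
              - (2 : ℝ) • h ⟨{i, j}, Finset.insert_nonempty i {j},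
                  Finset.card_insert_le _ _ |>.trans (by simp)⟩ := by
          simpa [hb, hh] using bell_castSucc i j
        rw [this]
        refine Submodule.sub_mem _ (Submodule.add_mem _ ?_ ?_) (Submodule.smul_mem _ _ ?_) <;>
          exact Submodule.subset_span ⟨_, rfl⟩
      · have : b ⟨(i.castSucc, Fin.last n), hpq⟩
            = h ⟨{i}, Finset.singleton_nonempty i, by simp⟩ := by
          simpa [hb, hh] using bell_last i
        rw [this]
        exact Submodule.subset_span ⟨_, rfl⟩
    · rw [Submodule.span_le]
      rintro _ ⟨⟨s, hs1, hs2⟩, rfl⟩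
      obtain hc | hc : s.card = 1 ∨ s.card = 2 := by
        have := Finset.card_pos.2 hs1; omega
      · obtain ⟨i, rfl⟩ := Finset.card_eq_one.1 hc
        exact hg1 i
      · obtain ⟨i, j, hij, rfl⟩ := Finset.card_eq_two.1 hc
        rcases lt_or_gt_of_ne hij with hlt | hgt
        · exact hg2 i j hlt
        · show gvec n {i, j} ∈ Submodule.span ℝ (Set.range b)
          rw [Finset.pair_comm]
          exact hg2 j i hgt
  -- the span of the `h` family equals the cut-out subspace `W`
  set W : Submodule ℝ ({I : Finset (Fin n) // I.Nonempty} → ℝ) :=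
    ⨅ V : {V : Finset (Fin n) // 3 ≤ V.card}, LinearMap.ker (Lmap n V.1) with hW
  have memW : ∀ x, x ∈ W ↔ ∀ V : Finset (Fin n), 3 ≤ V.card → Lmap n V x = 0 := by
    intro x
    simp only [hW, Submodule.mem_iInf, LinearMap.mem_ker, Subtype.forall]
  have hspan2 : Submodule.span ℝ (Set.range h) = W := by
    apply le_antisymm
    · rw [Submodule.span_le]
      rintro _ ⟨t, rfl⟩
      rw [SetLike.mem_coe, memW]
      intro V hV
      rw [hh, Lmap_gvec _ _ t.2.1, if_neg]
      rintro rfl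
      have := t.2.2
      omega
    · intro x hx
      rw [memW] at hx
      have key : x = ∑ t : {s : Finset (Fin n) // P s},
          ((-1 : ℝ) ^ t.1.card * Lmap n t.1 x) • h t := by
        funext I
        have e1 : (∑ t : {s : Finset (Fin n) // P s},
              ((-1 : ℝ) ^ t.1.card * Lmap n t.1 x) • h t) I
            = ∑ t : {s : Finset (Fin n) // P s},
              ((-1 : ℝ) ^ t.1.card * Lmap n t.1 x) * gvec n t.1 I := by
          simp [hh]
        rw [e1, ← Finset.sum_subtype (Finset.univ.filter P)
          (by intro s; simp) (fun s => ((-1 : ℝ) ^ s.card * Lmap n s x) * gvec n s I)]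
        unfold gvec
        simp only [mul_ite, mul_one, mul_zero]
        rw [← Finset.sum_filter]
        have e2 : (Finset.univ.filter P).filter (fun s => s ⊆ I.1)
            = I.1.powerset.filter P := by
          ext s
          simp only [Finset.mem_filter, Finset.mem_powerset, Finset.mem_univ, true_and]
          tauto
        rw [e2, Finset.sum_filter_of_ne, mobius]
        intro s hs hne
        rw [Finset.mem_powerset] at hs
        constructor
        · rw [Finset.nonempty_iff_ne_empty]
          rintro rfl
          rw [Lmap_empty, mul_zero] at hne
          exact hne rfl
        · by_contra hcard
          rw [hx s (by omega), mul_zero] at hne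
          exact hne rfl
      rw [key]
      exact Submodule.sum_mem _ fun t _ =>
        Submodule.smul_mem _ _ (Submodule.subset_span ⟨t, rfl⟩)
  have hspanW : Submodule.span ℝ (Set.range b) = W := hspan.trans hspan2
  refine ⟨?_, ?_, ?_⟩
  · rw [hspanW]
    ext x
    rw [SetLike.mem_coe, memW]
    simp only [Set.mem_setOf_eq, Lmap_apply]
  · -- linear independence of the `h` family
    have hLI : LinearIndependent ℝ h := by
      rw [Fintype.linearIndependent_iff]
      intro c hc t
      have h0 := congrArg (Lmap n t.1) hc
      rw [map_sum, map_zero] at h0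
      rw [Finset.sum_eq_single t] at h0
      · rw [map_smul, hh, Lmap_gvec _ _ t.2.1, if_pos rfl, smul_eq_mul] at h0
        have : ((-1 : ℝ) ^ t.1.card) ≠ 0 := by
          apply pow_ne_zero; norm_num
        exact (mul_eq_zero.1 h0).resolve_right this
      · intro s _ hst
        rw [map_smul, hh, Lmap_gvec _ _ s.2.1, if_neg, smul_zero]
        intro hts
        exact hst (Subtype.ext hts.symm)
      · intro habs
        exact absurd (Finset.mem_univ t) habs
    rw [hspan, finrank_span_eq_card hLI]
    -- count the small nonempty subsets
    rw [Fintype.card_subtype]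
    have hsplit : Finset.univ.filter P
        = Finset.powersetCard 1 (Finset.univ : Finset (Fin n))
          ∪ Finset.powersetCard 2 (Finset.univ : Finset (Fin n)) := by
      ext s
      simp only [Finset.mem_filter, Finset.mem_univ, true_and, Finset.mem_union,
        Finset.mem_powersetCard_univ, hP, ← Finset.card_pos]
      omega
    rw [hsplit, Finset.card_union_of_disjoint, Finset.card_powersetCard,
      Finset.card_powersetCard, Finset.card_univ, Fintype.card_fin, Nat.choose_one_right]
    rw [Finset.disjoint_left]
    intro s h1 h2
    rw [Finset.mem_powersetCard_univ] at h1 h2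
    omega
  · rw [Nat.choose_succ_succ, Nat.choose_one_right]
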